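/- arXiv:1401.0171 — 2 statements merged into one kernel-verified Lean document; each statement's English description precedes it below -/
import Mathlib

section
/- Assume the standing hypotheses on H, (Y1, Y2, X), M, H0 and (𝓕, 𝓡, W), and for each pair y ∈ Y1, y' ∈ Y2 lying in a common edge of M, let z_{y,y'} ∈ W ∩ V3 be the unique superfluous vertex such that (i) there exist u, v ∈ V(H0) with {y, v, z_{y,y'}} and {u, y', z_{y,y'}} edges of H, and (ii) every edge of H containing y or y' together with a superfluous vertex of V3 contains z_{y,y'}. Then the vertices z_{y,y'} are pairwise distinct for distinct pairs (y, y'), and the subgraph of B_3 induced by 𝓡 and (W ∩ V3) \ Z, where Z is the set of all z_{y,y'}, has a matching saturating 𝓡. -/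
noncomputable section

attribute [local instance] Classical.propDecidable

universe u

variable {α : Type u}

/-- A 3-partite 3-uniform multihypergraph: vertex classes `V1, V2, V3` and a
multiset of edges, each edge being a triple with one vertex in each class
(parallel edges are allowed via multiplicities). -/
structure TriSys (α : Type u) where
  V1 : Finset α
  V2 : Finset α
  V3 : Finset α
  h12 : Disjoint V1 V2
  h13 : Disjoint V1 V3
  h23 : Disjoint V2 V3
  edges : Multiset (α × α × α)
  mem1 : ∀ e ∈ edges, e.1 ∈ V1
  mem2 : ∀ e ∈ edges, e.2.1 ∈ V2
  mem3 : ∀ e ∈ edges, e.2.2 ∈ V3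

/-- The vertex set of an edge. -/
def evset (e : α × α × α) : Finset α := {e.1, e.2.1, e.2.2}

/-- The coordinates of an edge, indexed by `Fin 3`. -/
def ecoord (e : α × α × α) : Fin 3 → α := ![e.1, e.2.1, e.2.2]

namespace TriSys

def verts (H : TriSys α) : Finset α := H.V1 ∪ H.V2 ∪ H.V3

/-- The vertex classes, indexed by `Fin 3`. -/
def cls (H : TriSys α) : Fin 3 → Finset α := ![H.V1, H.V2, H.V3]

/-- A matching: a set of (pairwise vertex-disjoint) edges. -/
def IsMatching (H : TriSys α) (M : Finset (α × α × α)) : Prop :=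
  (∀ e ∈ M, e ∈ H.edges) ∧
  (↑M : Set (α × α × α)).Pairwise fun e f => Disjoint (evset e) (evset f)

/-- The matching number ν. -/
def nu (H : TriSys α) : ℕ :=
  sSup {n : ℕ | ∃ M : Finset (α × α × α), H.IsMatching M ∧ M.card = n}

/-- A vertex cover: a set of vertices meeting every edge. -/
def IsCover (H : TriSys α) (T : Finset α) : Prop :=
  ∀ e ∈ H.edges, ∃ v ∈ T, v ∈ evset e

/-- The vertex cover number τ. -/
def tau (H : TriSys α) : ℕ :=
  sInf {n : ℕ | ∃ T : Finset α, H.IsCover T ∧ T.card = n}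

/-- Deletion of a set of vertices (and all edges meeting it). -/
def delete (H : TriSys α) (S : Finset α) : TriSys α where
  V1 := H.V1 \ S
  V2 := H.V2 \ S
  V3 := H.V3 \ S
  h12 := H.h12.mono Finset.sdiff_subset Finset.sdiff_subset
  h13 := H.h13.mono Finset.sdiff_subset Finset.sdiff_subset
  h23 := H.h23.mono Finset.sdiff_subset Finset.sdiff_subset
  edges := H.edges.filter fun e => e.1 ∉ S ∧ e.2.1 ∉ S ∧ e.2.2 ∉ S
  mem1 := fun e he => by
    rw [Multiset.mem_filter] at he
    exact Finset.mem_sdiff.mpr ⟨H.mem1 e he.1, he.2.1⟩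
  mem2 := fun e he => by
    rw [Multiset.mem_filter] at he
    exact Finset.mem_sdiff.mpr ⟨H.mem2 e he.1, he.2.2.1⟩
  mem3 := fun e he => by
    rw [Multiset.mem_filter] at he
    exact Finset.mem_sdiff.mpr ⟨H.mem3 e he.1, he.2.2.2⟩

end TriSys

/-- The four edges of a truncated Fano plane on vertices `a,b,c,x,y,z`
(with classes `{a,x} ⊆ V1`, `{b,y} ⊆ V2`, `{c,z} ⊆ V3`). -/
def FanoEdges (a b c x y z : α) : Finset (α × α × α) :=
  {(a, b, c), (a, y, z), (x, b, z), (x, y, c)}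

/-- The supports of the edges of `H` induced on a vertex subset `F`. -/
def inducedEdges (H : TriSys α) (F : Finset α) : Finset (α × α × α) :=
  (H.edges.filter fun e => evset e ⊆ F).toFinset

/-- `H` induces a truncated multi-Fano plane on the six-element set `F`. -/
def IsMultiFano (H : TriSys α) (F : Finset α) : Prop :=
  ∃ a b c x y z : α,
    a ∈ H.V1 ∧ x ∈ H.V1 ∧ b ∈ H.V2 ∧ y ∈ H.V2 ∧ c ∈ H.V3 ∧ z ∈ H.V3 ∧
    a ≠ x ∧ b ≠ y ∧ c ≠ z ∧
    F = {a, b, c, x, y, z} ∧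
    inducedEdges H F = FanoEdges a b c x y z

/-- The data of an FR-partition: the families `𝓕` and `𝓡` and the set `W`. -/
structure FRData (α : Type u) where
  Ffam : Finset (Finset α)
  Rfam : Finset (Finset α)
  W : Finset α

/-- The union of the members of a family of sets. -/
def famUnion (G : Finset (Finset α)) : Finset α := G.biUnion id

/-- `(𝓕, 𝓡, W)` is an FR-partition of `H`. -/
def IsFRPartition (H : TriSys α) (P : FRData α) : Prop :=
  (∀ A ∈ P.Ffam, ∀ B ∈ P.Ffam, A ≠ B → Disjoint A B) ∧
  (∀ A ∈ P.Rfam, ∀ B ∈ P.Rfam, A ≠ B → Disjoint A B) ∧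
  (∀ A ∈ P.Ffam, ∀ B ∈ P.Rfam, Disjoint A B) ∧
  (∀ A ∈ P.Ffam, Disjoint A P.W) ∧
  (∀ B ∈ P.Rfam, Disjoint B P.W) ∧
  famUnion P.Ffam ∪ famUnion P.Rfam ∪ P.W = H.verts ∧
  (∀ A ∈ P.Ffam, IsMultiFano H A) ∧
  (∀ B ∈ P.Rfam, ∃ r1 ∈ H.V1, ∃ r2 ∈ H.V2, ∃ r3 ∈ H.V3, B = {r1, r2, r3}) ∧
  P.Ffam.card + P.Rfam.card = H.nu

/-- `w` is joined to `R` in the auxiliary bipartite graph `B_i`: some edge of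
`H` contains `w` and two vertices of `R`. -/
def RAdj (H : TriSys α) (R : Finset α) (w : α) : Prop :=
  ∃ e ∈ H.edges, w ∈ evset e ∧ 2 ≤ (evset e ∩ R).card

/-- The auxiliary bipartite graph on `Rfam` and `Wi` has a matching
saturating `Rfam`. -/
def SaturatingR (H : TriSys α) (Rfam : Finset (Finset α)) (Wi : Finset α) : Prop :=
  ∃ f : Finset α → α, Set.InjOn f ↑Rfam ∧ ∀ R ∈ Rfam, f R ∈ Wi ∧ RAdj H R (f R)

/-- Matchability of an FR-partition. -/
def IsMatchable (H : TriSys α) (P : FRData α) : Prop :=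
  ∀ i : Fin 3, SaturatingR H P.Rfam (P.W ∩ H.cls i)

/-- The edge-home property: every edge is an `F`-edge or an `R`-edge. -/
def EdgeHome (H : TriSys α) (P : FRData α) : Prop :=
  ∀ e ∈ H.edges,
    (∃ A ∈ P.Ffam, evset e ⊆ A) ∨ (∃ B ∈ P.Rfam, 2 ≤ (evset e ∩ B).card)

/-- A home-base partition: a matchable FR-partition with the edge-home
property. -/
def IsHomeBasePartition (H : TriSys α) (P : FRData α) : Prop :=
  IsFRPartition H P ∧ IsMatchable H P ∧ EdgeHome H P

/-- A home-base hypergraph: one admitting a home-base partition. -/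
def IsHomeBase (H : TriSys α) : Prop :=
  ∃ P : FRData α, IsHomeBasePartition H P

/-- The neighborhood of a family `U` of `R`'s in the auxiliary bipartite
graph with `W`-side `Wi`. -/
def RNbhd (H : TriSys α) (Wi : Finset α) (U : Finset (Finset α)) : Finset α :=
  Wi.filter fun w => ∃ R ∈ U, RAdj H R w

/-- `C` is an essential subset of `Wi` in the auxiliary bipartite graph:
`C = N(U)` for some `U ⊆ Rfam` with `|U| = |C|`. -/
def EssentialSet (H : TriSys α) (Rfam : Finset (Finset α)) (Wi : Finset α)
    (C : Finset α) : Prop :=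
  ∃ U ⊆ Rfam, U.card = C.card ∧ RNbhd H Wi U = C

/-- `w` is a superfluous vertex of `Wi`: it lies in no essential subset
(equivalently, outside the maximal essential subset). -/
def Superfluous (H : TriSys α) (Rfam : Finset (Finset α)) (Wi : Finset α)
    (w : α) : Prop :=
  w ∈ Wi ∧ ∀ C, EssentialSet H Rfam Wi C → w ∉ C

/-- `w` is a superfluous `W`-vertex of the FR-partition `P` (in its class). -/
def SuperfluousVert (H : TriSys α) (P : FRData α) (w : α) : Prop :=
  ∃ i : Fin 3, Superfluous H P.Rfam (P.W ∩ H.cls i) w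

/-- `v` is an essential `W`-vertex of the FR-partition `P`. -/
def EssentialVertIn (H : TriSys α) (P : FRData α) (v : α) : Prop :=
  ∃ i : Fin 3, EssentialSet H P.Rfam (P.W ∩ H.cls i) {v}

/-- `v` is essential for `R`: it is the unique neighbor of `R` in some `B_i`. -/
def EssentialForIn (H : TriSys α) (P : FRData α) (R : Finset α) (v : α) : Prop :=
  ∃ i : Fin 3, RNbhd H (P.W ∩ H.cls i) {R} = {v}

/-- The neighborhood, inside vertex class `j`, of a set `X` of class-`k`
vertices in the link graph of `H` over the remaining vertex class. -/
def nbr (H : TriSys α) (j k : Fin 3) (X : Finset α) : Finset α :=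
  (H.cls j).filter fun v => ∃ e ∈ H.edges, ecoord e j = v ∧ ecoord e k ∈ X

/-- A cromulent triple `(Y1, Y2, X)` with `Y1 ⊆ V_i`, `Y2 ⊆ V_j`, `X ⊆ V_k`. -/
def IsCromulent (H : TriSys α) (i j k : Fin 3) (Y1 Y2 X : Finset α) : Prop :=
  i ≠ j ∧ i ≠ k ∧ j ≠ k ∧
  Y1.Nonempty ∧ Y2.Nonempty ∧ X.Nonempty ∧
  Y1 ⊆ H.cls i ∧ Y2 ⊆ H.cls j ∧ X ⊆ H.cls k ∧
  Y1.card = Y2.card ∧ Y1.card ≤ X.card ∧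
  nbr H j k X = Y2 ∧
  (∃ M : Finset (α × α × α), H.IsMatching M ∧ M.card = Y1.card ∧
    ∀ e ∈ M, evset e ⊆ Y1 ∪ Y2 ∪ X) ∧
  IsHomeBase (H.delete (Y1 ∪ Y2 ∪ X)) ∧
  (H.delete (Y1 ∪ Y2 ∪ X)).nu + Y1.card = H.nu ∧
  ∀ P : FRData α, IsHomeBasePartition (H.delete (Y1 ∪ Y2 ∪ X)) P →
    nbr H i k X ⊆ Y1 ∪ famUnion P.Rfam ∪ famUnion P.Ffam

/-- A perfectly cromulent triple: condition (5) is strengthened to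
`N_{Lk_{V_j}}(X) = Y1`. -/
def IsPerfCromulent (H : TriSys α) (i j k : Fin 3) (Y1 Y2 X : Finset α) : Prop :=
  i ≠ j ∧ i ≠ k ∧ j ≠ k ∧
  Y1.Nonempty ∧ Y2.Nonempty ∧ X.Nonempty ∧
  Y1 ⊆ H.cls i ∧ Y2 ⊆ H.cls j ∧ X ⊆ H.cls k ∧
  Y1.card = Y2.card ∧ Y1.card ≤ X.card ∧
  nbr H j k X = Y2 ∧
  (∃ M : Finset (α × α × α), H.IsMatching M ∧ M.card = Y1.card ∧
    ∀ e ∈ M, evset e ⊆ Y1 ∪ Y2 ∪ X) ∧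
  IsHomeBase (H.delete (Y1 ∪ Y2 ∪ X)) ∧
  (H.delete (Y1 ∪ Y2 ∪ X)).nu + Y1.card = H.nu ∧
  nbr H i k X = Y1

/-- The link graph of `H` over the class other than `j, k` has a perfect
matching, encoded as a bijection from class `j` onto class `k` realized by
edges of `H`. -/
def LinkPerfectMatching (H : TriSys α) (j k : Fin 3) : Prop :=
  ∃ f : α → α, Set.InjOn f ↑(H.cls j) ∧ (H.cls j).image f = H.cls k ∧
    ∀ v ∈ H.cls j, ∃ e ∈ H.edges, ecoord e j = v ∧ ecoord e k = f v

/-- A proper FR-partition: no `R ∈ 𝓡` together with an edge consisting of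
three `W`-vertices induces a truncated (multi-)Fano plane. -/
def IsProper (H : TriSys α) (P : FRData α) : Prop :=
  ¬ ∃ R ∈ P.Rfam, ∃ e ∈ H.edges, evset e ⊆ P.W ∧ IsMultiFano H (R ∪ evset e)

/-! ### Auxiliary lemmas -/

section PrinceAux

variable {α : Type u}

lemma tau_le_card {H : TriSys α} {T : Finset α} (h : H.IsCover T) : H.tau ≤ T.card :=
  Nat.sInf_le ⟨T, h, rfl⟩

lemma rnbhd_subset (H : TriSys α) (Wi : Finset α) (U : Finset (Finset α)) :
    RNbhd H Wi U ⊆ Wi := Finset.filter_subset _ _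

lemma mem_rnbhd {H : TriSys α} {Wi : Finset α} {U : Finset (Finset α)} {w : α} :
    w ∈ RNbhd H Wi U ↔ w ∈ Wi ∧ ∃ R ∈ U, RAdj H R w := Finset.mem_filter

lemma rnbhd_mono {H : TriSys α} {Wi : Finset α} {U U' : Finset (Finset α)} (h : U ⊆ U') :
    RNbhd H Wi U ⊆ RNbhd H Wi U' := by
  intro w hw
  rw [mem_rnbhd] at hw ⊢
  obtain ⟨h1, R, hR, h2⟩ := hw
  exact ⟨h1, R, h hR, h2⟩

lemma rnbhd_union (H : TriSys α) (Wi : Finset α) (U U' : Finset (Finset α)) :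
    RNbhd H Wi (U ∪ U') = RNbhd H Wi U ∪ RNbhd H Wi U' := by
  ext w
  simp only [mem_rnbhd, Finset.mem_union]
  constructor
  · rintro ⟨h1, R, hR | hR, h2⟩
    · exact Or.inl ⟨h1, R, hR, h2⟩
    · exact Or.inr ⟨h1, R, hR, h2⟩
  · rintro (⟨h1, R, hR, h2⟩ | ⟨h1, R, hR, h2⟩)
    exacts [⟨h1, R, Or.inl hR, h2⟩, ⟨h1, R, Or.inr hR, h2⟩]

lemma rnbhd_sdiff (H : TriSys α) (Wi Z : Finset α) (U : Finset (Finset α)) :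
    RNbhd H (Wi \ Z) U = RNbhd H Wi U \ Z := by
  ext w
  simp only [mem_rnbhd, Finset.mem_sdiff]
  tauto

/-- Hall's condition for the auxiliary bipartite graph. -/
def HallCond (H : TriSys α) (Rfam : Finset (Finset α)) (Wi : Finset α) : Prop :=
  ∀ U ⊆ Rfam, U.card ≤ (RNbhd H Wi U).card

lemma hallCond_of_saturating {H : TriSys α} {Rfam : Finset (Finset α)} {Wi : Finset α}
    (h : SaturatingR H Rfam Wi) : HallCond H Rfam Wi := by
  obtain ⟨f, hinj, hf⟩ := h
  intro U hU
  have h1 : U.image f ⊆ RNbhd H Wi U := by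
    intro w hw
    rw [Finset.mem_image] at hw
    obtain ⟨R, hR, rfl⟩ := hw
    exact mem_rnbhd.mpr ⟨(hf R (hU hR)).1, R, hR, (hf R (hU hR)).2⟩
  have h2 : (U.image f).card = U.card :=
    Finset.card_image_of_injOn (hinj.mono (by exact_mod_cast hU))
  rw [← h2]
  exact Finset.card_le_card h1

lemma saturating_of_hallCond {H : TriSys α} {Rfam : Finset (Finset α)} {Wi : Finset α}
    (a0 : α) (h : HallCond H Rfam Wi) : SaturatingR H Rfam Wi := by
  classical
  set t : {R // R ∈ Rfam} → Finset α := fun R => Wi.filter fun w => RAdj H R.1 w with ht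
  have key : ∀ s : Finset {R // R ∈ Rfam}, s.card ≤ (s.biUnion t).card := by
    intro s
    have h2 : s.biUnion t = RNbhd H Wi (s.image Subtype.val) := by
      ext w
      simp only [Finset.mem_biUnion, ht, Finset.mem_filter, mem_rnbhd, Finset.mem_image]
      constructor
      · rintro ⟨R, hR, hw, hadj⟩
        exact ⟨hw, R.1, ⟨R, hR, rfl⟩, hadj⟩
      · rintro ⟨hw, R, ⟨R', hR', rfl⟩, hadj⟩
        exact ⟨R', hR', hw, hadj⟩
    rw [h2, ← Finset.card_image_of_injective s Subtype.val_injective]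
    refine h _ ?_
    intro R hR
    rw [Finset.mem_image] at hR
    obtain ⟨R', -, rfl⟩ := hR
    exact R'.2
  obtain ⟨f, hfinj, hf⟩ := (Finset.all_card_le_biUnion_card_iff_exists_injective t).mp key
  refine ⟨fun R => if hR : R ∈ Rfam then f ⟨R, hR⟩ else a0, ?_, ?_⟩
  · intro R hR R' hR' heq
    simp only [Finset.mem_coe] at hR hR'
    simp only [dif_pos hR, dif_pos hR'] at heq
    exact congrArg Subtype.val (hfinj heq)
  · intro R hR
    simp only [dif_pos hR]
    have h3 := hf ⟨R, hR⟩
    rw [ht, Finset.mem_filter] at h3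
    exact h3

lemma essential_empty (H : TriSys α) (Rfam : Finset (Finset α)) (Wi : Finset α) :
    EssentialSet H Rfam Wi (∅ : Finset α) := by
  refine ⟨∅, Finset.empty_subset _, by simp, ?_⟩
  ext w
  simp [RNbhd]

lemma essential_union {H : TriSys α} {Rfam : Finset (Finset α)} {Wi : Finset α}
    (hall : HallCond H Rfam Wi) {C1 C2 : Finset α}
    (h1 : EssentialSet H Rfam Wi C1) (h2 : EssentialSet H Rfam Wi C2) :
    EssentialSet H Rfam Wi (C1 ∪ C2) := by
  obtain ⟨U1, hU1, hc1, hn1⟩ := h1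
  obtain ⟨U2, hU2, hc2, hn2⟩ := h2
  have hnu : RNbhd H Wi (U1 ∪ U2) = C1 ∪ C2 := by rw [rnbhd_union, hn1, hn2]
  refine ⟨U1 ∪ U2, Finset.union_subset hU1 hU2, ?_, hnu⟩
  have hhall1 : (U1 ∪ U2).card ≤ (C1 ∪ C2).card := by
    have h3 := hall (U1 ∪ U2) (Finset.union_subset hU1 hU2)
    rwa [hnu] at h3
  have hint : (U1 ∩ U2).card ≤ (C1 ∩ C2).card := by
    have h4 : (U1 ∩ U2).card ≤ (RNbhd H Wi (U1 ∩ U2)).card :=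
      hall _ ((Finset.inter_subset_left).trans hU1)
    have h5 : RNbhd H Wi (U1 ∩ U2) ⊆ C1 ∩ C2 := by
      intro w hw
      exact Finset.mem_inter.mpr
        ⟨hn1 ▸ rnbhd_mono (Finset.inter_subset_left) hw,
         hn2 ▸ rnbhd_mono (Finset.inter_subset_right) hw⟩
    exact h4.trans (Finset.card_le_card h5)
  have e1 := Finset.card_union_add_card_inter U1 U2
  have e2 := Finset.card_union_add_card_inter C1 C2
  omega

lemma sup_essential {H : TriSys α} {Rfam : Finset (Finset α)} {Wi : Finset α}
    (hall : HallCond H Rfam Wi) (D : Finset (Finset α)) :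
    (∀ C ∈ D, EssentialSet H Rfam Wi C) → EssentialSet H Rfam Wi (D.sup id) := by
  classical
  induction D using Finset.induction_on with
  | empty =>
    intro _
    simpa using essential_empty H Rfam Wi
  | @insert C D' hC ih =>
    intro h
    rw [Finset.sup_insert]
    exact essential_union hall (h C (Finset.mem_insert_self _ _))
      (ih fun C' hC' => h C' (Finset.mem_insert_of_mem hC'))

lemma exists_max_essential {H : TriSys α} {Rfam : Finset (Finset α)} {Wi : Finset α}
    (hall : HallCond H Rfam Wi) :
    ∃ U ⊆ Rfam, U.card = (RNbhd H Wi U).card ∧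
      ∀ C, EssentialSet H Rfam Wi C → C ⊆ RNbhd H Wi U := by
  classical
  have hsubWi : ∀ C, EssentialSet H Rfam Wi C → C ⊆ Wi := by
    rintro C ⟨U, -, -, rfl⟩
    exact rnbhd_subset _ _ _
  set Dfam : Finset (Finset α) := Wi.powerset.filter (EssentialSet H Rfam Wi) with hDfam
  have hDess : EssentialSet H Rfam Wi (Dfam.sup id) := by
    refine sup_essential hall Dfam ?_
    intro C hC
    rw [hDfam, Finset.mem_filter] at hC
    exact hC.2
  obtain ⟨U, hU, hcard, hn⟩ := hDess
  refine ⟨U, hU, by rw [hn]; exact hcard, ?_⟩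
  intro C hC
  rw [hn]
  have hCin : C ∈ Dfam := by
    rw [hDfam, Finset.mem_filter, Finset.mem_powerset]
    exact ⟨hsubWi C hC, hC⟩
  exact Finset.le_sup (f := id) hCin

end PrinceAux

/-- Under the standing hypotheses, the vertices `z_{y,y'}` are pairwise
distinct, and the subgraph of `B₃` induced by `𝓡` and `(W ∩ V₃) \ Z` has a
matching saturating `𝓡`, where `Z` is the set of all `z_{y,y'}`. -/
theorem princes_distinct_and_saturating
    (H : TriSys α) (htau : H.tau = 2 * H.nu)
    (Y1 Y2 X : Finset α)
    (hcrom : IsCromulent H 0 1 2 Y1 Y2 X)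
    (M : Finset (α × α × α)) (hM : H.IsMatching M)
    (hMcard : M.card = Y1.card)
    (hMsub : ∀ e ∈ M, evset e ⊆ Y1 ∪ Y2 ∪ X)
    (P : FRData α)
    (hP : IsHomeBasePartition (H.delete (Y1 ∪ Y2 ∪ X)) P)
    (zf : α → α → α)
    (hzf : ∀ y y' : α, (∃ x, (y, y', x) ∈ M) →
      Superfluous (H.delete (Y1 ∪ Y2 ∪ X)) P.Rfam
        (P.W ∩ (H.delete (Y1 ∪ Y2 ∪ X)).cls 2) (zf y y') ∧
      (∃ v ∈ (H.delete (Y1 ∪ Y2 ∪ X)).verts, (y, v, zf y y') ∈ H.edges) ∧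
      (∃ u ∈ (H.delete (Y1 ∪ Y2 ∪ X)).verts, (u, y', zf y y') ∈ H.edges) ∧
      (∀ s' : α,
        Superfluous (H.delete (Y1 ∪ Y2 ∪ X)) P.Rfam
          (P.W ∩ (H.delete (Y1 ∪ Y2 ∪ X)).cls 2) s' →
        ((∃ v', (y, v', s') ∈ H.edges) ∨ (∃ u', (u', y', s') ∈ H.edges)) →
        s' = zf y y')) :
    (∀ e ∈ M, ∀ e' ∈ M, e ≠ e' → zf e.1 e.2.1 ≠ zf e'.1 e'.2.1) ∧
    SaturatingR (H.delete (Y1 ∪ Y2 ∪ X)) P.Rfam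
      ((P.W ∩ (H.delete (Y1 ∪ Y2 ∪ X)).cls 2) \
        M.image (fun e => zf e.1 e.2.1)) := by

  classical
  set H0 := H.delete (Y1 ∪ Y2 ∪ X) with hH0
  clear_value H0
  set Wi := P.W ∩ H0.cls 2 with hWidef
  clear_value Wi
  set Z := M.image (fun e => zf e.1 e.2.1) with hZdef
  clear_value Z
  obtain ⟨-, -, -, hY1ne, -, -, hY1sub, hY2sub, hXsub, hY12, -, hnbr12, -, -, hnuEq, -⟩ := hcrom
  obtain ⟨hFRpart, hMatchable, hEdgeHome⟩ := hP
  obtain ⟨-, -, -, -, -, hpart, hFano, hRstr, hcardFR⟩ := hFRpart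
  have hY1V1 : Y1 ⊆ H.V1 := hY1sub
  have hY2V2 : Y2 ⊆ H.V2 := hY2sub
  have hXV3 : X ⊆ H.V3 := hXsub
  have hH0V1 : H0.V1 = H.V1 \ (Y1 ∪ Y2 ∪ X) := by rw [hH0]; rfl
  have hH0V2 : H0.V2 = H.V2 \ (Y1 ∪ Y2 ∪ X) := by rw [hH0]; rfl
  have hH0V3 : H0.V3 = H.V3 \ (Y1 ∪ Y2 ∪ X) := by rw [hH0]; rfl
  have hY2of : ∀ e ∈ H.edges, e.2.2 ∈ X → e.2.1 ∈ Y2 := by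
    intro e he hx
    have h1 : e.2.1 ∈ nbr H 1 2 X :=
      Finset.mem_filter.mpr ⟨H.mem2 e he, e, he, rfl, hx⟩
    rwa [hnbr12] at h1
  have hnX : ∀ e ∈ H.edges, e.2.1 ∉ Y2 → e.2.2 ∉ X := fun e he h2 hx => h2 (hY2of e he hx)
  have hd12 := Finset.disjoint_left.mp H.h12
  have hd13 := Finset.disjoint_left.mp H.h13
  have hd23 := Finset.disjoint_left.mp H.h23
  have hH0edges : ∀ e ∈ H.edges, e.1 ∉ Y1 → e.2.1 ∉ Y2 → e.2.2 ∉ X → e ∈ H0.edges := by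
    intro e he h1 h2 h3
    rw [hH0]
    refine Multiset.mem_filter.mpr ⟨he, ?_, ?_, ?_⟩
    · intro hmem
      rcases Finset.mem_union.mp hmem with hmem | hmem
      · rcases Finset.mem_union.mp hmem with hmem | hmem
        · exact h1 hmem
        · exact hd12 (H.mem1 e he) (hY2V2 hmem)
      · exact hd13 (H.mem1 e he) (hXV3 hmem)
    · intro hmem
      rcases Finset.mem_union.mp hmem with hmem | hmem
      · rcases Finset.mem_union.mp hmem with hmem | hmem
        · exact hd12 (hY1V1 hmem) (H.mem2 e he)
        · exact h2 hmem
      · exact hd23 (H.mem2 e he) (hXV3 hmem)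
    · intro hmem
      rcases Finset.mem_union.mp hmem with hmem | hmem
      · rcases Finset.mem_union.mp hmem with hmem | hmem
        · exact hd13 (hY1V1 hmem) (H.mem3 e he)
        · exact hd23 (hY2V2 hmem) (H.mem3 e he)
      · exact h3 hmem
  have hV3H0 : ∀ c, c ∈ H.V3 → c ∉ X → c ∈ H0.V3 := by
    intro c h1 h2
    rw [hH0V3, Finset.mem_sdiff]
    refine ⟨h1, fun hm => ?_⟩
    rcases Finset.mem_union.mp hm with hm | hm
    · rcases Finset.mem_union.mp hm with hm | hm
      · exact hd13 (hY1V1 hm) h1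
      · exact hd23 (hY2V2 hm) h1
    · exact h2 hm
  have hH0V1sub : H0.V1 ⊆ H.V1 := by rw [hH0V1]; exact Finset.sdiff_subset
  have hH0V2sub : H0.V2 ⊆ H.V2 := by rw [hH0V2]; exact Finset.sdiff_subset
  have hH0V3sub : H0.V3 ⊆ H.V3 := by rw [hH0V3]; exact Finset.sdiff_subset
  have hpartc : ∀ c ∈ H0.V3, c ∈ famUnion P.Ffam ∨ c ∈ famUnion P.Rfam ∨ c ∈ P.W := by
    intro c hc
    have h1 : c ∈ H0.verts := by
      show c ∈ H0.V1 ∪ H0.V2 ∪ H0.V3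
      exact Finset.mem_union.mpr (Or.inr hc)
    rw [← hpart] at h1
    rcases Finset.mem_union.mp h1 with h | h
    · rcases Finset.mem_union.mp h with h | h
      · exact Or.inl h
      · exact Or.inr (Or.inl h)
    · exact Or.inr (Or.inr h)
  set Fcov := P.Ffam.biUnion (fun F => F ∩ H.V3) with hFcovdef
  clear_value Fcov
  have hFcovmem : ∀ F ∈ P.Ffam, ∀ v ∈ F, v ∈ H.V3 → v ∈ Fcov := by
    intro F hF v h1 h2
    rw [hFcovdef]
    exact Finset.mem_biUnion.mpr ⟨F, hF, Finset.mem_inter.mpr ⟨h1, h2⟩⟩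
  have hFcovcard : Fcov.card ≤ 2 * P.Ffam.card := by
    rw [hFcovdef]
    refine (Finset.card_biUnion_le).trans ?_
    have h1 : ∀ F ∈ P.Ffam, (F ∩ H.V3).card ≤ 2 := by
      intro F hF
      obtain ⟨a, b, c, x, y, z, ha, hx, hb, hy, hc, hz, -, -, -, hFeq, -⟩ := hFano F hF
      have h2 : F ∩ H.V3 ⊆ {c, z} := by
        intro v hv
        rw [Finset.mem_inter] at hv
        obtain ⟨hvF, hv3⟩ := hv
        rw [hFeq] at hvF
        simp only [Finset.mem_insert, Finset.mem_singleton] at hvF ⊢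
        rcases hvF with rfl | rfl | rfl | rfl | rfl | rfl
        · exact absurd hv3 (hd13 (hH0V1sub ha))
        · exact absurd hv3 (hd23 (hH0V2sub hb))
        · exact Or.inl rfl
        · exact absurd hv3 (hd13 (hH0V1sub hx))
        · exact absurd hv3 (hd23 (hH0V2sub hy))
        · exact Or.inr rfl
      refine (Finset.card_le_card h2).trans ?_
      exact (Finset.card_insert_le _ _).trans (by simp)
    calc ∑ F ∈ P.Ffam, (F ∩ H.V3).card ≤ ∑ _F ∈ P.Ffam, 2 := Finset.sum_le_sum h1
    _ = 2 * P.Ffam.card := by rw [Finset.sum_const, smul_eq_mul, mul_comm]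
  have hRV3 : ∀ R ∈ P.Rfam, (R ∩ H.V3).card ≤ 1 ∧ (R ∩ H.V1).card ≤ 1 := by
    intro R hR
    obtain ⟨r1, h1, r2, h2, r3, h3, hReq⟩ := hRstr R hR
    constructor
    · have hsub : R ∩ H.V3 ⊆ {r3} := by
        intro v hv
        rw [Finset.mem_inter] at hv
        obtain ⟨hvR, hv3⟩ := hv
        rw [hReq] at hvR
        simp only [Finset.mem_insert, Finset.mem_singleton] at hvR ⊢
        rcases hvR with rfl | rfl | rfl
        · exact absurd hv3 (hd13 (hH0V1sub h1))
        · exact absurd hv3 (hd23 (hH0V2sub h2))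
        · rfl
      exact (Finset.card_le_card hsub).trans (by simp)
    · have hsub : R ∩ H.V1 ⊆ {r1} := by
        intro v hv
        rw [Finset.mem_inter] at hv
        obtain ⟨hvR, hv1⟩ := hv
        rw [hReq] at hvR
        simp only [Finset.mem_insert, Finset.mem_singleton] at hvR ⊢
        rcases hvR with rfl | rfl | rfl
        · rfl
        · exact absurd (hH0V2sub h2) (hd12 hv1)
        · exact absurd (hH0V3sub h3) (hd13 hv1)
      exact (Finset.card_le_card hsub).trans (by simp)
  have hallWi : HallCond H0 P.Rfam Wi := by
    rw [hWidef]
    exact hallCond_of_saturating (hMatchable 2)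
  obtain ⟨Ustar, hUstarSub, hUstarCard, hUstarMax⟩ := exists_max_essential hallWi
  have hWsplit : ∀ c ∈ Wi, Superfluous H0 P.Rfam Wi c ∨ c ∈ RNbhd H0 Wi Ustar := by
    intro c hc
    by_cases hs : Superfluous H0 P.Rfam Wi c
    · exact Or.inl hs
    · right
      simp only [Superfluous] at hs
      push_neg at hs
      obtain ⟨C, hC, hcC⟩ := hs hc
      exact hUstarMax C hC hcC
  have hMinj1 : ∀ e ∈ M, ∀ e' ∈ M, e.1 = e'.1 → e = e' := by
    intro e he e' he' h
    by_contra hne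
    have hd := hM.2 (Finset.mem_coe.mpr he) (Finset.mem_coe.mpr he') hne
    have h1 : e.1 ∈ evset e := by simp [evset]
    have h2 : e.1 ∈ evset e' := by rw [h]; simp [evset]
    exact Finset.disjoint_left.mp hd h1 h2
  have hMcoord : ∀ e ∈ M, e.1 ∈ Y1 ∧ e.2.1 ∈ Y2 ∧ e.2.2 ∈ X := by
    intro e he
    have heH := hM.1 e he
    have hsub := hMsub e he
    refine ⟨?_, ?_, ?_⟩
    · have h1 := hsub (by simp [evset] : e.1 ∈ evset e)
      rcases Finset.mem_union.mp h1 with h | h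
      · rcases Finset.mem_union.mp h with h | h
        · exact h
        · exact absurd (hY2V2 h) (hd12 (H.mem1 e heH))
      · exact absurd (hXV3 h) (hd13 (H.mem1 e heH))
    · have h1 := hsub (by simp [evset] : e.2.1 ∈ evset e)
      rcases Finset.mem_union.mp h1 with h | h
      · rcases Finset.mem_union.mp h with h | h
        · exact absurd (H.mem2 e heH) (hd12 (hY1V1 h))
        · exact h
      · exact absurd (hXV3 h) (hd23 (H.mem2 e heH))
    · have h1 := hsub (by simp [evset] : e.2.2 ∈ evset e)
      rcases Finset.mem_union.mp h1 with h | h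
      · rcases Finset.mem_union.mp h with h | h
        · exact absurd (H.mem3 e heH) (hd13 (hY1V1 h))
        · exact absurd (H.mem3 e heH) (hd23 (hY2V2 h))
      · exact h
  have hnuval : P.Ffam.card + P.Rfam.card + Y1.card = H.nu := by
    rw [← hnuEq, ← hH0, hcardFR]
  have hV3T : ∀ (T : Finset α),
      (∀ F ∈ P.Ffam, ∀ v ∈ F, v ∈ H.V3 → v ∈ T) →
      (∀ R ∈ P.Rfam, ∀ v ∈ R, v ∈ H.V3 → v ∈ T) →
      ∀ c ∈ H0.V3, c ∈ T ∨ c ∈ P.W := by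
    intro T hFT hRT3 c hc
    have hc3 : c ∈ H.V3 := hH0V3sub hc
    rcases hpartc c hc with h | h | h
    · obtain ⟨F, hF, hcf⟩ := Finset.mem_biUnion.mp h
      exact Or.inl (hFT F hF c hcf hc3)
    · obtain ⟨R, hR, hcr⟩ := Finset.mem_biUnion.mp h
      exact Or.inl (hRT3 R hR c hcr hc3)
    · exact Or.inr h
  have coreC : ∀ (T : Finset α) (Usel : Finset (Finset α)), Ustar ⊆ Usel →
      (∀ F ∈ P.Ffam, ∀ v ∈ F, v ∈ H.V3 → v ∈ T) →
      (∀ R ∈ P.Rfam, ∀ v ∈ R, v ∈ H.V3 → v ∈ T) →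
      (∀ c ∈ RNbhd H0 Wi Usel, c ∈ T) →
      ∀ y y', (∃ x, (y, y', x) ∈ M) → zf y y' ∈ T →
      ∀ e ∈ H.edges, e.1 = y → e.2.1 ∉ Y2 → ∃ v ∈ T, v ∈ evset e := by
    intro T Usel hUU hFT hRT3 hNT y y' hyy' hzT e he h1 h2
    obtain ⟨hsup, -, -, huniq⟩ := hzf y y' hyy'
    have h3 : e.2.2 ∉ X := hnX e he h2
    have hc0 : e.2.2 ∈ H0.V3 := hV3H0 _ (H.mem3 e he) h3
    have hev3 : e.2.2 ∈ evset e := by simp [evset]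
    rcases hV3T T hFT hRT3 _ hc0 with hT | hW
    · exact ⟨_, hT, hev3⟩
    · have hWi2 : e.2.2 ∈ Wi := by
        rw [hWidef]
        exact Finset.mem_inter.mpr ⟨hW, hc0⟩
      rcases hWsplit _ hWi2 with hs | hD
      · have heq2 : e.2.2 = zf y y' := huniq e.2.2 hs (Or.inl ⟨e.2.1, by rw [← h1]; exact he⟩)
        exact ⟨zf y y', hzT, heq2 ▸ hev3⟩
      · exact ⟨_, hNT _ (rnbhd_mono hUU hD), hev3⟩
  have coverMain : ∀ (T : Finset α) (Usel : Finset (Finset α)),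
      (∀ F ∈ P.Ffam, ∀ v ∈ F, v ∈ H.V3 → v ∈ T) →
      (∀ R ∈ P.Rfam, ∀ v ∈ R, v ∈ H.V3 → v ∈ T) →
      (∀ R ∈ P.Rfam, R ∉ Usel → ∀ v ∈ R, v ∈ H.V1 → v ∈ T) →
      (∀ c ∈ RNbhd H0 Wi Usel, c ∈ T) →
      Y2 ⊆ T →
      (∀ e ∈ H.edges, e.1 ∈ Y1 → e.2.1 ∉ Y2 → ∃ v ∈ T, v ∈ evset e) →
      H.IsCover T := by
    intro T Usel hFT hRT3 hRT1 hNT hY2T hspec e he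
    by_cases h2 : e.2.1 ∈ Y2
    · exact ⟨e.2.1, hY2T h2, by simp [evset]⟩
    by_cases h1 : e.1 ∈ Y1
    · exact hspec e he h1 h2
    have h3 : e.2.2 ∉ X := hnX e he h2
    have heH0 : e ∈ H0.edges := hH0edges e he h1 h2 h3
    have h33 : e.2.2 ∈ H.V3 := H.mem3 e he
    have hev3 : e.2.2 ∈ evset e := by simp [evset]
    rcases hEdgeHome e heH0 with ⟨F, hF, hsubF⟩ | ⟨R, hR, hcard2⟩
    · exact ⟨e.2.2, hFT F hF e.2.2 (hsubF hev3) h33, hev3⟩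
    · by_cases hr3 : e.2.2 ∈ R
      · exact ⟨e.2.2, hRT3 R hR e.2.2 hr3 h33, hev3⟩
      have he1R : e.1 ∈ R := by
        by_contra hne
        have hss : evset e ∩ R ⊆ {e.2.1} := by
          intro v hv
          rw [Finset.mem_inter] at hv
          obtain ⟨hv1, hv2⟩ := hv
          simp only [evset, Finset.mem_insert, Finset.mem_singleton] at hv1 ⊢
          rcases hv1 with rfl | rfl | rfl
          · exact absurd hv2 hne
          · rfl
          · exact absurd hv2 hr3
        have hle := Finset.card_le_card hss
        rw [Finset.card_singleton] at hle
        omega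
      by_cases hUs : R ∈ Usel
      · have hc0 : e.2.2 ∈ H0.V3 := H0.mem3 e heH0
        rcases hV3T T hFT hRT3 _ hc0 with hT | hW
        · exact ⟨_, hT, hev3⟩
        · have hWi2 : e.2.2 ∈ Wi := by
            rw [hWidef]
            exact Finset.mem_inter.mpr ⟨hW, hc0⟩
          have hadj : RAdj H0 R e.2.2 := ⟨e, heH0, hev3, hcard2⟩
          exact ⟨_, hNT _ (mem_rnbhd.mpr ⟨hWi2, R, hUs, hadj⟩), hev3⟩
      · exact ⟨e.1, hRT1 R hR hUs e.1 he1R (H.mem1 e he), by simp [evset]⟩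
  have part1 : ∀ e ∈ M, ∀ e' ∈ M, e ≠ e' → zf e.1 e.2.1 ≠ zf e'.1 e'.2.1 := by
    intro e he e' he' hne heq
    have hy1 : e.1 ∈ Y1 := (hMcoord e he).1
    have hw1 : e'.1 ∈ Y1 := (hMcoord e' he').1
    have hyw : e.1 ≠ e'.1 := fun h => hne (hMinj1 e he e' he' h)
    have hUC2 : (RNbhd H0 Wi Ustar).card = Ustar.card := hUstarCard.symm
    set A : Finset α := Y1 \ {e.1, e'.1} with hA
    clear_value A
    set RcovU : Finset α := Ustar.biUnion (fun R => R ∩ H.V3) with hRcovU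
    clear_value RcovU
    set RcovR : Finset α := (P.Rfam \ Ustar).biUnion (fun R => R ∩ H.V1 ∪ R ∩ H.V3) with hRcovR
    clear_value RcovR
    set D : Finset α := RNbhd H0 Wi Ustar with hD
    clear_value D
    set T : Finset α := A ∪ Y2 ∪ {zf e.1 e.2.1} ∪ Fcov ∪ RcovU ∪ RcovR ∪ D with hT
    clear_value T
    have hmemT : ∀ v, (v ∈ A ∨ v ∈ Y2 ∨ v = zf e.1 e.2.1 ∨ v ∈ Fcov ∨ v ∈ RcovU ∨ v ∈ RcovR ∨ v ∈ D) → v ∈ T := by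
      intro v hv
      rw [hT]
      simp only [Finset.mem_union, Finset.mem_singleton]
      tauto
    have hFT : ∀ F ∈ P.Ffam, ∀ v ∈ F, v ∈ H.V3 → v ∈ T :=
      fun F hF v h1 h2 => hmemT v (Or.inr (Or.inr (Or.inr (Or.inl (hFcovmem F hF v h1 h2)))))
    have hRT3 : ∀ R ∈ P.Rfam, ∀ v ∈ R, v ∈ H.V3 → v ∈ T := by
      intro R hR v h1 h2
      by_cases hu : R ∈ Ustar
      · refine hmemT v (Or.inr (Or.inr (Or.inr (Or.inr (Or.inl ?_)))))
        rw [hRcovU]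
        exact Finset.mem_biUnion.mpr ⟨R, hu, Finset.mem_inter.mpr ⟨h1, h2⟩⟩
      · refine hmemT v (Or.inr (Or.inr (Or.inr (Or.inr (Or.inr (Or.inl ?_))))))
        rw [hRcovR]
        exact Finset.mem_biUnion.mpr ⟨R, Finset.mem_sdiff.mpr ⟨hR, hu⟩,
          Finset.mem_union.mpr (Or.inr (Finset.mem_inter.mpr ⟨h1, h2⟩))⟩
    have hRT1 : ∀ R ∈ P.Rfam, R ∉ Ustar → ∀ v ∈ R, v ∈ H.V1 → v ∈ T := by
      intro R hR hu v h1 h2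
      refine hmemT v (Or.inr (Or.inr (Or.inr (Or.inr (Or.inr (Or.inl ?_))))))
      rw [hRcovR]
      exact Finset.mem_biUnion.mpr ⟨R, Finset.mem_sdiff.mpr ⟨hR, hu⟩,
        Finset.mem_union.mpr (Or.inl (Finset.mem_inter.mpr ⟨h1, h2⟩))⟩
    have hNT : ∀ c ∈ RNbhd H0 Wi Ustar, c ∈ T := by
      intro c hc
      refine hmemT c (Or.inr (Or.inr (Or.inr (Or.inr (Or.inr (Or.inr ?_))))))
      rw [hD]
      exact hc
    have hY2T : Y2 ⊆ T := fun v hv => hmemT v (Or.inr (Or.inl hv))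
    have hzT : zf e.1 e.2.1 ∈ T := hmemT _ (Or.inr (Or.inr (Or.inl rfl)))
    have hzT' : zf e'.1 e'.2.1 ∈ T := by rw [← heq]; exact hzT
    have hspec : ∀ e0 ∈ H.edges, e0.1 ∈ Y1 → e0.2.1 ∉ Y2 → ∃ v ∈ T, v ∈ evset e0 := by
      intro e0 he0 h01 h02
      by_cases hc1 : e0.1 = e.1
      · exact coreC T Ustar (Finset.Subset.refl _) hFT hRT3 hNT e.1 e.2.1 ⟨e.2.2, he⟩ hzT e0 he0 hc1 h02
      by_cases hc2 : e0.1 = e'.1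
      · exact coreC T Ustar (Finset.Subset.refl _) hFT hRT3 hNT e'.1 e'.2.1 ⟨e'.2.2, he'⟩ hzT' e0 he0 hc2 h02
      · refine ⟨e0.1, hmemT _ (Or.inl ?_), by simp [evset]⟩
        rw [hA, Finset.mem_sdiff]
        exact ⟨h01, by simp [hc1, hc2]⟩
    have hcover := coverMain T Ustar hFT hRT3 hRT1 hNT hY2T hspec
    have ht := tau_le_card hcover
    have c0 : ({e.1, e'.1} : Finset α).card = 2 := Finset.card_pair hyw
    have csub : ({e.1, e'.1} : Finset α) ⊆ Y1 := by
      intro v hv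
      simp only [Finset.mem_insert, Finset.mem_singleton] at hv
      rcases hv with rfl | rfl
      exacts [hy1, hw1]
    have c1 : A.card = Y1.card - 2 := by rw [hA, Finset.card_sdiff_of_subset csub, c0]
    have cY : 2 ≤ Y1.card := by
      have := Finset.card_le_card csub
      omega
    have c2 : Y2.card = Y1.card := hY12.symm
    have c5 : RcovU.card ≤ Ustar.card := by
      rw [hRcovU]
      refine Finset.card_biUnion_le.trans ?_
      calc ∑ R ∈ Ustar, (R ∩ H.V3).card ≤ ∑ _R ∈ Ustar, 1 :=
        Finset.sum_le_sum (fun R hR => (hRV3 R (hUstarSub hR)).1)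
      _ = Ustar.card := by simp
    have c6 : RcovR.card ≤ 2 * (P.Rfam.card - Ustar.card) := by
      rw [hRcovR]
      refine Finset.card_biUnion_le.trans ?_
      have hb : ∀ R ∈ P.Rfam \ Ustar, (R ∩ H.V1 ∪ R ∩ H.V3).card ≤ 2 := by
        intro R hR
        rw [Finset.mem_sdiff] at hR
        have h1 := hRV3 R hR.1
        have h2 := Finset.card_union_le (R ∩ H.V1) (R ∩ H.V3)
        omega
      calc ∑ R ∈ P.Rfam \ Ustar, (R ∩ H.V1 ∪ R ∩ H.V3).card
          ≤ ∑ _R ∈ P.Rfam \ Ustar, 2 := Finset.sum_le_sum hb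
      _ = 2 * (P.Rfam \ Ustar).card := by rw [Finset.sum_const, smul_eq_mul, mul_comm]
      _ = 2 * (P.Rfam.card - Ustar.card) := by rw [Finset.card_sdiff_of_subset hUstarSub]
    have c7 : D.card = Ustar.card := hUC2
    have c8 : Ustar.card ≤ P.Rfam.card := Finset.card_le_card hUstarSub
    have u1 := Finset.card_union_le (A ∪ Y2 ∪ {zf e.1 e.2.1} ∪ Fcov ∪ RcovU ∪ RcovR) D
    have u2 := Finset.card_union_le (A ∪ Y2 ∪ {zf e.1 e.2.1} ∪ Fcov ∪ RcovU) RcovR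
    have u3 := Finset.card_union_le (A ∪ Y2 ∪ {zf e.1 e.2.1} ∪ Fcov) RcovU
    have u4 := Finset.card_union_le (A ∪ Y2 ∪ {zf e.1 e.2.1}) Fcov
    have u5 := Finset.card_union_le (A ∪ Y2) ({zf e.1 e.2.1} : Finset α)
    have u6 := Finset.card_union_le A Y2
    have csing : ({zf e.1 e.2.1} : Finset α).card = 1 := Finset.card_singleton _
    rw [hT] at ht
    omega
  refine ⟨part1, ?_⟩
  by_contra hns
  obtain ⟨y0, hy0⟩ := hY1ne
  have hHallfail : ¬ HallCond H0 P.Rfam (Wi \ Z) := fun h => hns (saturating_of_hallCond y0 h)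
  simp only [HallCond] at hHallfail
  push_neg at hHallfail
  obtain ⟨U0, hU0sub, hdef⟩ := hHallfail
  rw [rnbhd_sdiff] at hdef
  set U1 : Finset (Finset α) := U0 ∪ Ustar with hU1
  clear_value U1
  have hU1sub : U1 ⊆ P.Rfam := by
    rw [hU1]
    exact Finset.union_subset hU0sub hUstarSub
  have hZsup : ∀ z ∈ Z, Superfluous H0 P.Rfam Wi z := by
    intro z hz
    rw [hZdef, Finset.mem_image] at hz
    obtain ⟨e, he, rfl⟩ := hz
    exact (hzf e.1 e.2.1 ⟨e.2.2, he⟩).1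
  have hDZ : Disjoint (RNbhd H0 Wi Ustar) Z := by
    rw [Finset.disjoint_right]
    intro z hz hzD
    exact (hZsup z hz).2 _ ⟨Ustar, hUstarSub, hUstarCard, rfl⟩ hzD
  have hdef1 : (RNbhd H0 Wi U1 \ Z).card + 1 ≤ U1.card := by
    have e0 : RNbhd H0 Wi U1 = RNbhd H0 Wi U0 ∪ RNbhd H0 Wi Ustar := by
      rw [hU1]
      exact rnbhd_union _ _ _ _
    have e1 : RNbhd H0 Wi U1 \ Z = (RNbhd H0 Wi U0 \ Z) ∪ RNbhd H0 Wi Ustar := by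
      rw [e0, Finset.union_sdiff_distrib, Finset.sdiff_eq_self_of_disjoint hDZ]
    have hsub1 : RNbhd H0 Wi (U0 ∩ Ustar) ⊆ (RNbhd H0 Wi U0 \ Z) ∩ RNbhd H0 Wi Ustar := by
      intro c hc
      have hc1 := rnbhd_mono (Finset.inter_subset_left) hc
      have hc2 := rnbhd_mono (Finset.inter_subset_right) hc
      have hcz : c ∉ Z := fun hcz => Finset.disjoint_left.mp hDZ hc2 hcz
      exact Finset.mem_inter.mpr ⟨Finset.mem_sdiff.mpr ⟨hc1, hcz⟩, hc2⟩
    have h1 := hallWi (U0 ∩ Ustar) ((Finset.inter_subset_right).trans hUstarSub)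
    have h2 := Finset.card_le_card hsub1
    have h3 := Finset.card_union_add_card_inter (RNbhd H0 Wi U0 \ Z) (RNbhd H0 Wi Ustar)
    have h4 := Finset.card_union_add_card_inter U0 Ustar
    have h5 : (RNbhd H0 Wi Ustar).card = Ustar.card := hUstarCard.symm
    have hU1c : U1.card = (U0 ∪ Ustar).card := by rw [hU1]
    rw [e1]
    omega
  set M' := M.filter (fun e => zf e.1 e.2.1 ∈ RNbhd H0 Wi U1) with hM'
  clear_value M'
  set Ys := M'.image (fun e => e.1) with hYs
  clear_value Ys
  set K := M'.image (fun e => zf e.1 e.2.1) with hK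
  clear_value K
  have hM'M : M' ⊆ M := by
    rw [hM']
    exact Finset.filter_subset _ _
  have hYsY1 : Ys ⊆ Y1 := by
    intro v hv
    rw [hYs, Finset.mem_image] at hv
    obtain ⟨e, he, rfl⟩ := hv
    exact (hMcoord e (hM'M he)).1
  have hYscard : Ys.card = M'.card := by
    rw [hYs]
    exact Finset.card_image_of_injOn (fun e he e' he' h => hMinj1 e (hM'M he) e' (hM'M he') h)
  have hKcard : K.card ≤ M'.card := by
    rw [hK]
    exact Finset.card_image_le
  set A := Y1 \ Ys with hA
  clear_value A
  set RcovU := U1.biUnion (fun R => R ∩ H.V3) with hRcovU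
  clear_value RcovU
  set RcovR := (P.Rfam \ U1).biUnion (fun R => R ∩ H.V1 ∪ R ∩ H.V3) with hRcovR
  clear_value RcovR
  set Dd := RNbhd H0 Wi U1 \ Z with hDd
  clear_value Dd
  set T := A ∪ Y2 ∪ K ∪ Fcov ∪ RcovU ∪ RcovR ∪ Dd with hT
  clear_value T
  have hmemT : ∀ v, (v ∈ A ∨ v ∈ Y2 ∨ v ∈ K ∨ v ∈ Fcov ∨ v ∈ RcovU ∨ v ∈ RcovR ∨ v ∈ Dd) → v ∈ T := by
    intro v hv
    rw [hT]
    simp only [Finset.mem_union]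
    tauto
  have hFT : ∀ F ∈ P.Ffam, ∀ v ∈ F, v ∈ H.V3 → v ∈ T :=
    fun F hF v h1 h2 => hmemT v (Or.inr (Or.inr (Or.inr (Or.inl (hFcovmem F hF v h1 h2)))))
  have hRT3 : ∀ R ∈ P.Rfam, ∀ v ∈ R, v ∈ H.V3 → v ∈ T := by
    intro R hR v h1 h2
    by_cases hu : R ∈ U1
    · refine hmemT v (Or.inr (Or.inr (Or.inr (Or.inr (Or.inl ?_)))))
      rw [hRcovU]
      exact Finset.mem_biUnion.mpr ⟨R, hu, Finset.mem_inter.mpr ⟨h1, h2⟩⟩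
    · refine hmemT v (Or.inr (Or.inr (Or.inr (Or.inr (Or.inr (Or.inl ?_))))))
      rw [hRcovR]
      exact Finset.mem_biUnion.mpr ⟨R, Finset.mem_sdiff.mpr ⟨hR, hu⟩,
        Finset.mem_union.mpr (Or.inr (Finset.mem_inter.mpr ⟨h1, h2⟩))⟩
  have hRT1 : ∀ R ∈ P.Rfam, R ∉ U1 → ∀ v ∈ R, v ∈ H.V1 → v ∈ T := by
    intro R hR hu v h1 h2
    refine hmemT v (Or.inr (Or.inr (Or.inr (Or.inr (Or.inr (Or.inl ?_))))))
    rw [hRcovR]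
    exact Finset.mem_biUnion.mpr ⟨R, Finset.mem_sdiff.mpr ⟨hR, hu⟩,
      Finset.mem_union.mpr (Or.inl (Finset.mem_inter.mpr ⟨h1, h2⟩))⟩
  have hNT : ∀ c ∈ RNbhd H0 Wi U1, c ∈ T := by
    intro c hc
    by_cases hcz : c ∈ Z
    · rw [hZdef, Finset.mem_image] at hcz
      obtain ⟨e, he, rfl⟩ := hcz
      refine hmemT _ (Or.inr (Or.inr (Or.inl ?_)))
      rw [hK, Finset.mem_image]
      refine ⟨e, ?_, rfl⟩
      rw [hM', Finset.mem_filter]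
      exact ⟨he, hc⟩
    · refine hmemT _ (Or.inr (Or.inr (Or.inr (Or.inr (Or.inr (Or.inr ?_))))))
      rw [hDd]
      exact Finset.mem_sdiff.mpr ⟨hc, hcz⟩
  have hY2T : Y2 ⊆ T := fun v hv => hmemT v (Or.inr (Or.inl hv))
  have hspec : ∀ e0 ∈ H.edges, e0.1 ∈ Y1 → e0.2.1 ∉ Y2 → ∃ v ∈ T, v ∈ evset e0 := by
    intro e0 he0 h01 h02
    by_cases hys : e0.1 ∈ Ys
    · rw [hYs, Finset.mem_image] at hys
      obtain ⟨e, he, heq1⟩ := hys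
      have heM := hM'M he
      have hzK : zf e.1 e.2.1 ∈ T := by
        refine hmemT _ (Or.inr (Or.inr (Or.inl ?_)))
        rw [hK, Finset.mem_image]
        exact ⟨e, he, rfl⟩
      exact coreC T U1 (by rw [hU1]; exact Finset.subset_union_right) hFT hRT3 hNT
        e.1 e.2.1 ⟨e.2.2, heM⟩ hzK e0 he0 heq1.symm h02
    · refine ⟨e0.1, hmemT _ (Or.inl ?_), by simp [evset]⟩
      rw [hA, Finset.mem_sdiff]
      exact ⟨h01, hys⟩
  have hcover := coverMain T U1 hFT hRT3 hRT1 hNT hY2T hspec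
  have ht := tau_le_card hcover
  have c1 : A.card = Y1.card - Ys.card := by rw [hA, Finset.card_sdiff_of_subset hYsY1]
  have cYs : Ys.card ≤ Y1.card := Finset.card_le_card hYsY1
  have c2 : Y2.card = Y1.card := hY12.symm
  have c5 : RcovU.card ≤ U1.card := by
    rw [hRcovU]
    refine Finset.card_biUnion_le.trans ?_
    calc ∑ R ∈ U1, (R ∩ H.V3).card ≤ ∑ _R ∈ U1, 1 :=
      Finset.sum_le_sum (fun R hR => (hRV3 R (hU1sub hR)).1)
    _ = U1.card := by simp
  have c6 : RcovR.card ≤ 2 * (P.Rfam.card - U1.card) := by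
    rw [hRcovR]
    refine Finset.card_biUnion_le.trans ?_
    have hb : ∀ R ∈ P.Rfam \ U1, (R ∩ H.V1 ∪ R ∩ H.V3).card ≤ 2 := by
      intro R hR
      rw [Finset.mem_sdiff] at hR
      have h1 := hRV3 R hR.1
      have h2 := Finset.card_union_le (R ∩ H.V1) (R ∩ H.V3)
      omega
    calc ∑ R ∈ P.Rfam \ U1, (R ∩ H.V1 ∪ R ∩ H.V3).card
        ≤ ∑ _R ∈ P.Rfam \ U1, 2 := Finset.sum_le_sum hb
    _ = 2 * (P.Rfam \ U1).card := by rw [Finset.sum_const, smul_eq_mul, mul_comm]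
    _ = 2 * (P.Rfam.card - U1.card) := by rw [Finset.card_sdiff_of_subset hU1sub]
  have c8 : U1.card ≤ P.Rfam.card := Finset.card_le_card hU1sub
  have hY1pos : 1 ≤ Y1.card := Finset.card_pos.mpr ⟨y0, hy0⟩
  have u1 := Finset.card_union_le (A ∪ Y2 ∪ K ∪ Fcov ∪ RcovU ∪ RcovR) Dd
  have u2 := Finset.card_union_le (A ∪ Y2 ∪ K ∪ Fcov ∪ RcovU) RcovR
  have u3 := Finset.card_union_le (A ∪ Y2 ∪ K ∪ Fcov) RcovU
  have u4 := Finset.card_union_le (A ∪ Y2 ∪ K) Fcov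
  have u5 := Finset.card_union_le (A ∪ Y2) K
  have u6 := Finset.card_union_le A Y2
  rw [hT] at ht
  omega
end
end

section
/- Let H be a 3-partite 3-graph with vertex classes V1, V2, V3 such that each link graph Lk_{V_i}(H) has a perfect matching. Suppose X ⊆ V_j is a minimal equineighbored set of Lk_{V_i}(H) with |X| = 2, and suppose there do not exist two disjoint edges of H each meeting X. Then the set of edges of H incident to X forms a truncated multi-Fano plane. -/
noncomputable section

attribute [local instance] Classical.propDecidable

universe u

variable {α : Type u}

@[simp] lemma ecoord_zero' (e : α × α × α) : ecoord e 0 = e.1 := rfl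
@[simp] lemma ecoord_one' (e : α × α × α) : ecoord e 1 = e.2.1 := rfl
@[simp] lemma ecoord_two' (e : α × α × α) : ecoord e 2 = e.2.2 := rfl

lemma ecoord_mem_cls (H : TriSys α) {e : α × α × α} (he : e ∈ H.edges) (l : Fin 3) :
    ecoord e l ∈ H.cls l := by
  fin_cases l
  · exact H.mem1 e he
  · exact H.mem2 e he
  · exact H.mem3 e he

lemma cls_disjoint (H : TriSys α) {l m : Fin 3} (h : l ≠ m) :
    Disjoint (H.cls l) (H.cls m) := by
  fin_cases l <;> fin_cases m <;>
    first
      | exact absurd rfl h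
      | exact H.h12
      | exact H.h13
      | exact H.h23
      | exact H.h12.symm
      | exact H.h13.symm
      | exact H.h23.symm

lemma mem_evset_iff {e : α × α × α} {w : α} : w ∈ evset e ↔ ∃ l : Fin 3, ecoord e l = w := by
  constructor
  · intro hw
    rcases Finset.mem_insert.mp hw with h | hw'
    · exact ⟨0, h.symm⟩
    rcases Finset.mem_insert.mp hw' with h | h
    · exact ⟨1, h.symm⟩
    · exact ⟨2, (Finset.mem_singleton.mp h).symm⟩
  · rintro ⟨l, rfl⟩
    fin_cases l
    · exact Finset.mem_insert_self _ _
    · exact Finset.mem_insert_of_mem (Finset.mem_insert_self _ _)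
    · exact Finset.mem_insert_of_mem (Finset.mem_insert_of_mem (Finset.mem_singleton_self _))

lemma fin3_eq_of_ne : ∀ (i j k l : Fin 3),
    i ≠ j → i ≠ k → j ≠ k → l ≠ j → l ≠ k → l = i := by
  intro i j k l h1 h2 h3 h4 h5
  have bi := i.isLt; have bj := j.isLt; have bk := k.isLt; have bl := l.isLt
  simp only [Ne, Fin.ext_iff] at h1 h2 h3 h4 h5 ⊢
  omega

lemma fano_of_patterns (H : TriSys α) (S : Finset (α × α × α)) (i j k : Fin 3)
    (hij : i ≠ j) (hik : i ≠ k) (hjk : j ≠ k)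
    (A B p q u v : α)
    (hA : A ∈ H.cls i) (hB : B ∈ H.cls i) (hp : p ∈ H.cls j) (hq : q ∈ H.cls j)
    (hu : u ∈ H.cls k) (hv : v ∈ H.cls k)
    (hAB : A ≠ B) (hpq : p ≠ q) (huv : u ≠ v)
    (hmem : ∀ e ∈ S,
      (ecoord e i = A ∧ ecoord e j = p ∧ ecoord e k = u) ∨
      (ecoord e i = A ∧ ecoord e j = q ∧ ecoord e k = v) ∨
      (ecoord e i = B ∧ ecoord e j = p ∧ ecoord e k = v) ∨
      (ecoord e i = B ∧ ecoord e j = q ∧ ecoord e k = u))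
    (h1 : ∃ e ∈ S, ecoord e i = A ∧ ecoord e j = p ∧ ecoord e k = u)
    (h2 : ∃ e ∈ S, ecoord e i = A ∧ ecoord e j = q ∧ ecoord e k = v)
    (h3 : ∃ e ∈ S, ecoord e i = B ∧ ecoord e j = p ∧ ecoord e k = v)
    (h4 : ∃ e ∈ S, ecoord e i = B ∧ ecoord e j = q ∧ ecoord e k = u) :
    ∃ a b c x y z : α,
      a ∈ H.V1 ∧ x ∈ H.V1 ∧ b ∈ H.V2 ∧ y ∈ H.V2 ∧ c ∈ H.V3 ∧ z ∈ H.V3 ∧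
      a ≠ x ∧ b ≠ y ∧ c ≠ z ∧ S = FanoEdges a b c x y z := by
  obtain ⟨⟨a1, a2, a3⟩, hs1, h1i, h1j, h1k⟩ := h1
  obtain ⟨⟨b1, b2, b3⟩, hs2, h2i, h2j, h2k⟩ := h2
  obtain ⟨⟨c1, c2, c3⟩, hs3, h3i, h3j, h3k⟩ := h3
  obtain ⟨⟨d1, d2, d3⟩, hs4, h4i, h4j, h4k⟩ := h4
  fin_cases i <;> fin_cases j <;> fin_cases k
  all_goals try exact absurd rfl hij
  all_goals try exact absurd rfl hik
  all_goals try exact absurd rfl hjk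
  -- case (i,j,k) = (0, 1, 2)
  · refine ⟨A, p, u, B, q, v, hA, hB, hp, hq, hu, hv, hAB, hpq, huv, ?_⟩
    ext ⟨x1, x2, x3⟩
    simp only [FanoEdges, Finset.mem_insert, Finset.mem_singleton, Prod.mk.injEq]
    constructor
    · intro hm
      rcases hmem _ hm with ⟨ha, hb, hc⟩ | ⟨ha, hb, hc⟩ | ⟨ha, hb, hc⟩ | ⟨ha, hb, hc⟩
      · exact Or.inl ⟨ha, hb, hc⟩
      · exact Or.inr (Or.inl ⟨ha, hb, hc⟩)
      · exact Or.inr (Or.inr (Or.inl ⟨ha, hb, hc⟩))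
      · exact Or.inr (Or.inr (Or.inr ⟨ha, hb, hc⟩))
    · intro hd
      rcases hd with ⟨g1, g2, g3⟩ | ⟨g1, g2, g3⟩ | ⟨g1, g2, g3⟩ | ⟨g1, g2, g3⟩
      · have hx1 : x1 = a1 := g1.trans h1i.symm
        have hx2 : x2 = a2 := g2.trans h1j.symm
        have hx3 : x3 = a3 := g3.trans h1k.symm
        rw [hx1, hx2, hx3]; exact hs1
      · have hx1 : x1 = b1 := g1.trans h2i.symm
        have hx2 : x2 = b2 := g2.trans h2j.symm
        have hx3 : x3 = b3 := g3.trans h2k.symm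
        rw [hx1, hx2, hx3]; exact hs2
      · have hx1 : x1 = c1 := g1.trans h3i.symm
        have hx2 : x2 = c2 := g2.trans h3j.symm
        have hx3 : x3 = c3 := g3.trans h3k.symm
        rw [hx1, hx2, hx3]; exact hs3
      · have hx1 : x1 = d1 := g1.trans h4i.symm
        have hx2 : x2 = d2 := g2.trans h4j.symm
        have hx3 : x3 = d3 := g3.trans h4k.symm
        rw [hx1, hx2, hx3]; exact hs4
  -- case (i,j,k) = (0, 2, 1)
  · refine ⟨A, u, p, B, v, q, hA, hB, hu, hv, hp, hq, hAB, huv, hpq, ?_⟩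
    ext ⟨x1, x2, x3⟩
    simp only [FanoEdges, Finset.mem_insert, Finset.mem_singleton, Prod.mk.injEq]
    constructor
    · intro hm
      rcases hmem _ hm with ⟨ha, hb, hc⟩ | ⟨ha, hb, hc⟩ | ⟨ha, hb, hc⟩ | ⟨ha, hb, hc⟩
      · exact Or.inl ⟨ha, hc, hb⟩
      · exact Or.inr (Or.inl ⟨ha, hc, hb⟩)
      · exact Or.inr (Or.inr (Or.inr ⟨ha, hc, hb⟩))
      · exact Or.inr (Or.inr (Or.inl ⟨ha, hc, hb⟩))
    · intro hd
      rcases hd with ⟨g1, g2, g3⟩ | ⟨g1, g2, g3⟩ | ⟨g1, g2, g3⟩ | ⟨g1, g2, g3⟩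
      · have hx1 : x1 = a1 := g1.trans h1i.symm
        have hx2 : x2 = a2 := g2.trans h1k.symm
        have hx3 : x3 = a3 := g3.trans h1j.symm
        rw [hx1, hx2, hx3]; exact hs1
      · have hx1 : x1 = b1 := g1.trans h2i.symm
        have hx2 : x2 = b2 := g2.trans h2k.symm
        have hx3 : x3 = b3 := g3.trans h2j.symm
        rw [hx1, hx2, hx3]; exact hs2
      · have hx1 : x1 = d1 := g1.trans h4i.symm
        have hx2 : x2 = d2 := g2.trans h4k.symm
        have hx3 : x3 = d3 := g3.trans h4j.symm
        rw [hx1, hx2, hx3]; exact hs4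
      · have hx1 : x1 = c1 := g1.trans h3i.symm
        have hx2 : x2 = c2 := g2.trans h3k.symm
        have hx3 : x3 = c3 := g3.trans h3j.symm
        rw [hx1, hx2, hx3]; exact hs3
  -- case (i,j,k) = (1, 0, 2)
  · refine ⟨p, A, u, q, B, v, hp, hq, hA, hB, hu, hv, hpq, hAB, huv, ?_⟩
    ext ⟨x1, x2, x3⟩
    simp only [FanoEdges, Finset.mem_insert, Finset.mem_singleton, Prod.mk.injEq]
    constructor
    · intro hm
      rcases hmem _ hm with ⟨ha, hb, hc⟩ | ⟨ha, hb, hc⟩ | ⟨ha, hb, hc⟩ | ⟨ha, hb, hc⟩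
      · exact Or.inl ⟨hb, ha, hc⟩
      · exact Or.inr (Or.inr (Or.inl ⟨hb, ha, hc⟩))
      · exact Or.inr (Or.inl ⟨hb, ha, hc⟩)
      · exact Or.inr (Or.inr (Or.inr ⟨hb, ha, hc⟩))
    · intro hd
      rcases hd with ⟨g1, g2, g3⟩ | ⟨g1, g2, g3⟩ | ⟨g1, g2, g3⟩ | ⟨g1, g2, g3⟩
      · have hx1 : x1 = a1 := g1.trans h1j.symm
        have hx2 : x2 = a2 := g2.trans h1i.symm
        have hx3 : x3 = a3 := g3.trans h1k.symm
        rw [hx1, hx2, hx3]; exact hs1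
      · have hx1 : x1 = c1 := g1.trans h3j.symm
        have hx2 : x2 = c2 := g2.trans h3i.symm
        have hx3 : x3 = c3 := g3.trans h3k.symm
        rw [hx1, hx2, hx3]; exact hs3
      · have hx1 : x1 = b1 := g1.trans h2j.symm
        have hx2 : x2 = b2 := g2.trans h2i.symm
        have hx3 : x3 = b3 := g3.trans h2k.symm
        rw [hx1, hx2, hx3]; exact hs2
      · have hx1 : x1 = d1 := g1.trans h4j.symm
        have hx2 : x2 = d2 := g2.trans h4i.symm
        have hx3 : x3 = d3 := g3.trans h4k.symm
        rw [hx1, hx2, hx3]; exact hs4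
  -- case (i,j,k) = (1, 2, 0)
  · refine ⟨u, A, p, v, B, q, hu, hv, hA, hB, hp, hq, huv, hAB, hpq, ?_⟩
    ext ⟨x1, x2, x3⟩
    simp only [FanoEdges, Finset.mem_insert, Finset.mem_singleton, Prod.mk.injEq]
    constructor
    · intro hm
      rcases hmem _ hm with ⟨ha, hb, hc⟩ | ⟨ha, hb, hc⟩ | ⟨ha, hb, hc⟩ | ⟨ha, hb, hc⟩
      · exact Or.inl ⟨hc, ha, hb⟩
      · exact Or.inr (Or.inr (Or.inl ⟨hc, ha, hb⟩))
      · exact Or.inr (Or.inr (Or.inr ⟨hc, ha, hb⟩))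
      · exact Or.inr (Or.inl ⟨hc, ha, hb⟩)
    · intro hd
      rcases hd with ⟨g1, g2, g3⟩ | ⟨g1, g2, g3⟩ | ⟨g1, g2, g3⟩ | ⟨g1, g2, g3⟩
      · have hx1 : x1 = a1 := g1.trans h1k.symm
        have hx2 : x2 = a2 := g2.trans h1i.symm
        have hx3 : x3 = a3 := g3.trans h1j.symm
        rw [hx1, hx2, hx3]; exact hs1
      · have hx1 : x1 = d1 := g1.trans h4k.symm
        have hx2 : x2 = d2 := g2.trans h4i.symm
        have hx3 : x3 = d3 := g3.trans h4j.symm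
        rw [hx1, hx2, hx3]; exact hs4
      · have hx1 : x1 = b1 := g1.trans h2k.symm
        have hx2 : x2 = b2 := g2.trans h2i.symm
        have hx3 : x3 = b3 := g3.trans h2j.symm
        rw [hx1, hx2, hx3]; exact hs2
      · have hx1 : x1 = c1 := g1.trans h3k.symm
        have hx2 : x2 = c2 := g2.trans h3i.symm
        have hx3 : x3 = c3 := g3.trans h3j.symm
        rw [hx1, hx2, hx3]; exact hs3
  -- case (i,j,k) = (2, 0, 1)
  · refine ⟨p, u, A, q, v, B, hp, hq, hu, hv, hA, hB, hpq, huv, hAB, ?_⟩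
    ext ⟨x1, x2, x3⟩
    simp only [FanoEdges, Finset.mem_insert, Finset.mem_singleton, Prod.mk.injEq]
    constructor
    · intro hm
      rcases hmem _ hm with ⟨ha, hb, hc⟩ | ⟨ha, hb, hc⟩ | ⟨ha, hb, hc⟩ | ⟨ha, hb, hc⟩
      · exact Or.inl ⟨hb, hc, ha⟩
      · exact Or.inr (Or.inr (Or.inr ⟨hb, hc, ha⟩))
      · exact Or.inr (Or.inl ⟨hb, hc, ha⟩)
      · exact Or.inr (Or.inr (Or.inl ⟨hb, hc, ha⟩))
    · intro hd
      rcases hd with ⟨g1, g2, g3⟩ | ⟨g1, g2, g3⟩ | ⟨g1, g2, g3⟩ | ⟨g1, g2, g3⟩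
      · have hx1 : x1 = a1 := g1.trans h1j.symm
        have hx2 : x2 = a2 := g2.trans h1k.symm
        have hx3 : x3 = a3 := g3.trans h1i.symm
        rw [hx1, hx2, hx3]; exact hs1
      · have hx1 : x1 = c1 := g1.trans h3j.symm
        have hx2 : x2 = c2 := g2.trans h3k.symm
        have hx3 : x3 = c3 := g3.trans h3i.symm
        rw [hx1, hx2, hx3]; exact hs3
      · have hx1 : x1 = d1 := g1.trans h4j.symm
        have hx2 : x2 = d2 := g2.trans h4k.symm
        have hx3 : x3 = d3 := g3.trans h4i.symm
        rw [hx1, hx2, hx3]; exact hs4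
      · have hx1 : x1 = b1 := g1.trans h2j.symm
        have hx2 : x2 = b2 := g2.trans h2k.symm
        have hx3 : x3 = b3 := g3.trans h2i.symm
        rw [hx1, hx2, hx3]; exact hs2
  -- case (i,j,k) = (2, 1, 0)
  · refine ⟨u, p, A, v, q, B, hu, hv, hp, hq, hA, hB, huv, hpq, hAB, ?_⟩
    ext ⟨x1, x2, x3⟩
    simp only [FanoEdges, Finset.mem_insert, Finset.mem_singleton, Prod.mk.injEq]
    constructor
    · intro hm
      rcases hmem _ hm with ⟨ha, hb, hc⟩ | ⟨ha, hb, hc⟩ | ⟨ha, hb, hc⟩ | ⟨ha, hb, hc⟩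
      · exact Or.inl ⟨hc, hb, ha⟩
      · exact Or.inr (Or.inr (Or.inr ⟨hc, hb, ha⟩))
      · exact Or.inr (Or.inr (Or.inl ⟨hc, hb, ha⟩))
      · exact Or.inr (Or.inl ⟨hc, hb, ha⟩)
    · intro hd
      rcases hd with ⟨g1, g2, g3⟩ | ⟨g1, g2, g3⟩ | ⟨g1, g2, g3⟩ | ⟨g1, g2, g3⟩
      · have hx1 : x1 = a1 := g1.trans h1k.symm
        have hx2 : x2 = a2 := g2.trans h1j.symm
        have hx3 : x3 = a3 := g3.trans h1i.symm
        rw [hx1, hx2, hx3]; exact hs1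
      · have hx1 : x1 = d1 := g1.trans h4k.symm
        have hx2 : x2 = d2 := g2.trans h4j.symm
        have hx3 : x3 = d3 := g3.trans h4i.symm
        rw [hx1, hx2, hx3]; exact hs4
      · have hx1 : x1 = c1 := g1.trans h3k.symm
        have hx2 : x2 = c2 := g2.trans h3j.symm
        have hx3 : x3 = c3 := g3.trans h3i.symm
        rw [hx1, hx2, hx3]; exact hs3
      · have hx1 : x1 = b1 := g1.trans h2k.symm
        have hx2 : x2 = b2 := g2.trans h2j.symm
        have hx3 : x3 = b3 := g3.trans h2i.symm
        rw [hx1, hx2, hx3]; exact hs2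

/-- If every link graph of `H` has a perfect matching, `X` is a minimal
equineighbored set of size `2` in the link graph over class `i` (with
`X ⊆ V_j`), and no two disjoint edges of `H` both meet `X`, then the edges of
`H` incident to `X` form a truncated multi-Fano plane. -/
theorem incident_edges_form_multiFano (H : TriSys α)
    (hpm : ∀ j k : Fin 3, j ≠ k → LinkPerfectMatching H j k)
    (i j k : Fin 3) (hij : i ≠ j) (hik : i ≠ k) (hjk : j ≠ k)
    (X : Finset α) (hXsub : X ⊆ H.cls j) (hXcard : X.card = 2)
    (hXne : X.Nonempty)
    (hequi : (nbr H k j X).card = X.card)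
    (hmin : ∀ X' ⊂ X, X'.Nonempty → (nbr H k j X').card ≠ X'.card)
    (hnotwo : ¬ ∃ e ∈ H.edges, ∃ f ∈ H.edges,
      (evset e ∩ X).Nonempty ∧ (evset f ∩ X).Nonempty ∧
      Disjoint (evset e) (evset f)) :
    ∃ a b c x y z : α,
      a ∈ H.V1 ∧ x ∈ H.V1 ∧ b ∈ H.V2 ∧ y ∈ H.V2 ∧ c ∈ H.V3 ∧ z ∈ H.V3 ∧
      a ≠ x ∧ b ≠ y ∧ c ≠ z ∧
      (H.edges.filter fun e => (evset e ∩ X).Nonempty).toFinset =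
        FanoEdges a b c x y z := by
    classical
  obtain ⟨p, q, hpq, hX⟩ := Finset.card_eq_two.mp hXcard
  have hpX : p ∈ X := by rw [hX]; exact Finset.mem_insert_self _ _
  have hqX : q ∈ X := by rw [hX]; exact Finset.mem_insert_of_mem (Finset.mem_singleton_self _)
  have hpcls : p ∈ H.cls j := hXsub hpX
  have hqcls : q ∈ H.cls j := hXsub hqX
  have hmeets : ∀ e ∈ H.edges, ((evset e ∩ X).Nonempty ↔ ecoord e j ∈ X) := by
    intro e he
    constructor
    · rintro ⟨w, hw⟩
      rw [Finset.mem_inter] at hw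
      obtain ⟨hwe, hwX⟩ := hw
      obtain ⟨l, rfl⟩ := mem_evset_iff.mp hwe
      by_cases hlj : l = j
      · rwa [hlj] at hwX
      · exact absurd (hXsub hwX)
          (Finset.disjoint_left.mp (cls_disjoint H hlj) (ecoord_mem_cls H he l))
    · intro hj
      exact ⟨ecoord e j, Finset.mem_inter.mpr ⟨mem_evset_iff.mpr ⟨j, rfl⟩, hj⟩⟩
  have hsame : ∀ e ∈ H.edges, ∀ f ∈ H.edges, ecoord e j ∈ X → ecoord f j ∈ X →
      ecoord e j ≠ ecoord f j → ecoord e k ≠ ecoord f k → ecoord e i = ecoord f i := by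
    intro e he f hf heX hfX hnej hnek
    have hnd : ¬ Disjoint (evset e) (evset f) := by
      intro hd
      exact hnotwo ⟨e, he, f, hf, (hmeets e he).mpr heX, (hmeets f hf).mpr hfX, hd⟩
    obtain ⟨w, hwe, hwf⟩ := Finset.not_disjoint_iff.mp hnd
    obtain ⟨l, rfl⟩ := mem_evset_iff.mp hwe
    obtain ⟨m, hm⟩ := mem_evset_iff.mp hwf
    have hlm : l = m := by
      by_contra hne
      exact absurd (hm ▸ ecoord_mem_cls H hf m)
        (Finset.disjoint_left.mp (cls_disjoint H hne) (ecoord_mem_cls H he l))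
    subst hlm
    have hlj : l ≠ j := by rintro rfl; exact hnej hm.symm
    have hlk : l ≠ k := by rintro rfl; exact hnek hm.symm
    have hli : l = i := fin3_eq_of_ne i j k l hij hik hjk hlj hlk
    subst hli
    exact hm.symm
  have hNcard : (nbr H k j X).card = 2 := by rw [hequi, hXcard]
  have hNsingle : ∀ x0 ∈ X, nbr H k j {x0} = nbr H k j X := by
    intro x0 hx0
    have hsub : nbr H k j {x0} ⊆ nbr H k j X := by
      intro w hw
      simp only [nbr, Finset.mem_filter] at hw ⊢
      obtain ⟨hw1, e, he, h1, h2⟩ := hw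
      refine ⟨hw1, e, he, h1, ?_⟩
      rw [Finset.mem_singleton] at h2
      rw [h2]; exact hx0
    have hne : (nbr H k j {x0}).Nonempty := by
      obtain ⟨f, finj, fim, hf⟩ := hpm j k hjk
      obtain ⟨e, he, hej, hek⟩ := hf x0 (hXsub hx0)
      refine ⟨f x0, ?_⟩
      simp only [nbr, Finset.mem_filter]
      refine ⟨?_, e, he, hek, by rw [hej]; exact Finset.mem_singleton_self _⟩
      rw [← fim]
      exact Finset.mem_image_of_mem f (hXsub hx0)
    have hne1 : (nbr H k j {x0}).card ≠ 1 := by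
      have hss : {x0} ⊂ X := by
        rw [Finset.ssubset_iff_subset_ne]
        refine ⟨Finset.singleton_subset_iff.mpr hx0, ?_⟩
        intro h
        rw [← h] at hXcard
        simp at hXcard
      simpa using hmin {x0} hss ⟨x0, Finset.mem_singleton_self x0⟩
    have h1le : 1 ≤ (nbr H k j {x0}).card := Finset.card_pos.mpr hne
    exact Finset.eq_of_subset_of_card_le hsub (by omega)
  obtain ⟨u, v, huv, hN⟩ := Finset.card_eq_two.mp hNcard
  have huN : u ∈ nbr H k j X := by rw [hN]; exact Finset.mem_insert_self _ _
  have hvN : v ∈ nbr H k j X := by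
    rw [hN]; exact Finset.mem_insert_of_mem (Finset.mem_singleton_self _)
  have hucls : u ∈ H.cls k := by
    have := huN; simp only [nbr, Finset.mem_filter] at this; exact this.1
  have hvcls : v ∈ H.cls k := by
    have := hvN; simp only [nbr, Finset.mem_filter] at this; exact this.1
  have hgetedge : ∀ x0 ∈ X, ∀ w ∈ nbr H k j X,
      ∃ e ∈ H.edges, ecoord e j = x0 ∧ ecoord e k = w := by
    intro x0 hx0 w hw
    rw [← hNsingle x0 hx0] at hw
    simp only [nbr, Finset.mem_filter] at hw
    obtain ⟨-, e, he, h1, h2⟩ := hw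
    rw [Finset.mem_singleton] at h2
    exact ⟨e, he, h2, h1⟩
  obtain ⟨e1, he1, he1j, he1k⟩ := hgetedge p hpX u huN
  obtain ⟨e2, he2, he2j, he2k⟩ := hgetedge p hpX v hvN
  obtain ⟨e3, he3, he3j, he3k⟩ := hgetedge q hqX u huN
  obtain ⟨e4, he4, he4j, he4k⟩ := hgetedge q hqX v hvN
  have he4i : ecoord e4 i = ecoord e1 i :=
    hsame e4 he4 e1 he1 (by rw [he4j]; exact hqX) (by rw [he1j]; exact hpX)
      (by rw [he4j, he1j]; exact hpq.symm) (by rw [he4k, he1k]; exact huv.symm)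
  have he3i : ecoord e3 i = ecoord e2 i :=
    hsame e3 he3 e2 he2 (by rw [he3j]; exact hqX) (by rw [he2j]; exact hpX)
      (by rw [he3j, he2j]; exact hpq.symm) (by rw [he3k, he2k]; exact huv)
  have hclass : ∀ e ∈ H.edges, ecoord e j ∈ X →
      (ecoord e i = ecoord e1 i ∧ ecoord e j = p ∧ ecoord e k = u) ∨
      (ecoord e i = ecoord e1 i ∧ ecoord e j = q ∧ ecoord e k = v) ∨
      (ecoord e i = ecoord e2 i ∧ ecoord e j = p ∧ ecoord e k = v) ∨
      (ecoord e i = ecoord e2 i ∧ ecoord e j = q ∧ ecoord e k = u) := by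
    intro e he hejX
    have hekN : ecoord e k ∈ nbr H k j X := by
      simp only [nbr, Finset.mem_filter]
      exact ⟨ecoord_mem_cls H he k, e, he, rfl, hejX⟩
    rw [hN] at hekN
    have hj' : ecoord e j = p ∨ ecoord e j = q := by
      rw [hX] at hejX; simpa using hejX
    have hk' : ecoord e k = u ∨ ecoord e k = v := by simpa using hekN
    rcases hj' with hjp | hjq <;> rcases hk' with hku | hkv
    · refine Or.inl ⟨?_, hjp, hku⟩
      rw [← he4i]
      exact hsame e he e4 he4 hejX (by rw [he4j]; exact hqX)
        (by rw [hjp, he4j]; exact hpq) (by rw [hku, he4k]; exact huv)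
    · refine Or.inr (Or.inr (Or.inl ⟨?_, hjp, hkv⟩))
      rw [← he3i]
      exact hsame e he e3 he3 hejX (by rw [he3j]; exact hqX)
        (by rw [hjp, he3j]; exact hpq) (by rw [hkv, he3k]; exact huv.symm)
    · refine Or.inr (Or.inr (Or.inr ⟨?_, hjq, hku⟩))
      exact hsame e he e2 he2 hejX (by rw [he2j]; exact hpX)
        (by rw [hjq, he2j]; exact hpq.symm) (by rw [hku, he2k]; exact huv)
    · refine Or.inr (Or.inl ⟨?_, hjq, hkv⟩)
      exact hsame e he e1 he1 hejX (by rw [he1j]; exact hpX)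
        (by rw [hjq, he1j]; exact hpq.symm) (by rw [hkv, he1k]; exact huv.symm)
  have hAB : ecoord e1 i ≠ ecoord e2 i := by
    obtain ⟨f, finj, fim, hf⟩ := hpm j i (Ne.symm hij)
    obtain ⟨gp, hgp, hgpj, hgpi⟩ := hf p hpcls
    obtain ⟨gq, hgq, hgqj, hgqi⟩ := hf q hqcls
    have hfpq : ecoord gp i ≠ ecoord gq i := by
      rw [hgpi, hgqi]
      intro h
      exact hpq (finj hpcls hqcls h)
    have hp' : ecoord gp i = ecoord e1 i ∨ ecoord gp i = ecoord e2 i := by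
      rcases hclass gp hgp (by rw [hgpj]; exact hpX) with
        ⟨h, -, -⟩ | ⟨h, -, -⟩ | ⟨h, -, -⟩ | ⟨h, -, -⟩
      · exact Or.inl h
      · exact Or.inl h
      · exact Or.inr h
      · exact Or.inr h
    have hq' : ecoord gq i = ecoord e1 i ∨ ecoord gq i = ecoord e2 i := by
      rcases hclass gq hgq (by rw [hgqj]; exact hqX) with
        ⟨h, -, -⟩ | ⟨h, -, -⟩ | ⟨h, -, -⟩ | ⟨h, -, -⟩
      · exact Or.inl h
      · exact Or.inl h
      · exact Or.inr h
      · exact Or.inr h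
    intro hE
    rcases hp' with h | h <;> rcases hq' with h' | h'
    · exact hfpq (h.trans h'.symm)
    · exact hfpq ((h.trans hE).trans h'.symm)
    · exact hfpq ((h.trans hE.symm).trans h'.symm)
    · exact hfpq (h.trans h'.symm)
  have hSmem : ∀ e, e ∈ (H.edges.filter fun e => (evset e ∩ X).Nonempty).toFinset ↔
      (e ∈ H.edges ∧ ecoord e j ∈ X) := by
    intro e
    rw [Multiset.mem_toFinset, Multiset.mem_filter]
    constructor
    · rintro ⟨he, hne⟩; exact ⟨he, (hmeets e he).mp hne⟩
    · rintro ⟨he, h⟩; exact ⟨he, (hmeets e he).mpr h⟩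
  refine fano_of_patterns H _ i j k hij hik hjk (ecoord e1 i) (ecoord e2 i) p q u v
    (ecoord_mem_cls H he1 i) (ecoord_mem_cls H he2 i) hpcls hqcls hucls hvcls
    hAB hpq huv ?_ ?_ ?_ ?_ ?_
  · intro e he
    exact hclass e ((hSmem e).mp he).1 ((hSmem e).mp he).2
  · exact ⟨e1, (hSmem e1).mpr ⟨he1, by rw [he1j]; exact hpX⟩, rfl, he1j, he1k⟩
  · exact ⟨e4, (hSmem e4).mpr ⟨he4, by rw [he4j]; exact hqX⟩, he4i, he4j, he4k⟩
  · exact ⟨e2, (hSmem e2).mpr ⟨he2, by rw [he2j]; exact hpX⟩, rfl, he2j, he2k⟩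
  · exact ⟨e3, (hSmem e3).mpr ⟨he3, by rw [he3j]; exact hqX⟩, he3i, he3j, he3k⟩
end
end
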